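/- For every sequence (εₙ)_{n≥1} of positive real numbers there exist irrational numbers s, t ∈ (0,1) such that the IFS Φ_{s,t} = {x/2, (x+1)/2, (x+s)/2, (x+1+s)/2, (x+t)/2, (x+1+t)/2} contains no exact overlap (i.e., φ_α ≠ φ_β for all distinct finite words α, β of equal length), yet Δₙ ≤ εₙ for all n ≥ 1, where Δₙ = min{|φ_α(0) − φ_β(0)| : α ≠ β ∈ {1,...,6}ⁿ}. -/

import Mathlib

open scoped BigOperators

noncomputable def phiST (s t : ℝ) (i : Fin 6) (x : ℝ) : ℝ :=
  (x + ![0, 1, s, 1 + s, t, 1 + t] i) / 2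

noncomputable def compST (s t : ℝ) (l : List (Fin 6)) : ℝ → ℝ :=
  l.foldr (fun i g => phiST s t i ∘ g) id

noncomputable def DeltaST (s t : ℝ) (n : ℕ) : ℝ :=
  sInf {r : ℝ | ∃ a b : List (Fin 6), a.length = n ∧ b.length = n ∧ a ≠ b ∧
    r = |compST s t a 0 - compST s t b 0|}

/-! ### Auxiliary lemmas -/

lemma summable_pow_half {g : ℕ → ℕ} (hg : ∀ j, j ≤ g j) :
    Summable (fun j => ((2:ℝ)⁻¹) ^ (g j)) := by
  refine Summable.of_nonneg_of_le (fun j => by positivity)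
    (fun j => pow_le_pow_of_le_one (by norm_num) (by norm_num) (hg j))
    (summable_geometric_of_lt_one (by norm_num) (by norm_num))

lemma tsum_pow_half_le {g : ℕ → ℕ} {c : ℕ} (hg : ∀ j, c + j ≤ g j) :
    (∑' j, ((2:ℝ)⁻¹) ^ (g j)) ≤ ((2:ℝ)⁻¹) ^ c * 2 := by
  have h1 : (∑' j, ((2:ℝ)⁻¹) ^ (g j)) ≤ ∑' j, ((2:ℝ)⁻¹) ^ (c + j) := by
    refine Summable.tsum_le_tsum (fun j => pow_le_pow_of_le_one (by norm_num) (by norm_num) (hg j))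
      (summable_pow_half (fun j => le_trans (Nat.le_add_left j c) (hg j)))
      (summable_pow_half (fun j => Nat.le_add_left j c))
  have h2 : ∑' j, ((2:ℝ)⁻¹) ^ (c + j) = ((2:ℝ)⁻¹)^c * (1 - 2⁻¹)⁻¹ := by
    simp_rw [pow_add]
    rw [tsum_mul_left, tsum_geometric_of_lt_one (by norm_num) (by norm_num)]
  rw [h2] at h1
  convert h1 using 2
  norm_num

lemma tsum_pow_half_lt_one {g : ℕ → ℕ} (hg : ∀ j, 2*j+1 ≤ g j) :
    (∑' j, ((2:ℝ)⁻¹) ^ (g j)) < 1 := by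
  have h1 : (∑' j, ((2:ℝ)⁻¹) ^ (g j)) ≤ ∑' j, ((2:ℝ)⁻¹) ^ (2*j+1) := by
    refine Summable.tsum_le_tsum (fun j => pow_le_pow_of_le_one (by norm_num) (by norm_num) (hg j))
      (summable_pow_half (fun j => le_trans (by omega) (hg j)))
      (summable_pow_half (fun j => by omega))
  have h2 : ∑' j, ((2:ℝ)⁻¹) ^ (2*j+1) = (2:ℝ)⁻¹ * (1 - 4⁻¹)⁻¹ := by
    have : ∀ j:ℕ, ((2:ℝ)⁻¹) ^ (2*j+1) = 2⁻¹ * ((4:ℝ)⁻¹)^j := by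
      intro j
      rw [pow_add, pow_mul]
      norm_num
      ring
    simp_rw [this]
    rw [tsum_mul_left, tsum_geometric_of_lt_one (by norm_num) (by norm_num)]
  rw [h2] at h1
  nlinarith [h1]

lemma tsum_pow_half_pos {g : ℕ → ℕ} (hg : ∀ j, j ≤ g j) :
    0 < (∑' j, ((2:ℝ)⁻¹) ^ (g j)) := by
  have := Summable.le_tsum (summable_pow_half hg) 0 (fun j _ => by positivity)
  have h0 : (0:ℝ) < ((2:ℝ)⁻¹) ^ (g 0) := by positivity
  linarith

lemma x_add {x : ℕ → ℕ} (hgap : ∀ k, x k + k + 1 ≤ x (k+1)) : ∀ K k, x K + k ≤ x (K + k) := by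
  intro K k
  induction k with
  | zero => simp
  | succ k ih =>
    have e : K + (k+1) = (K+k)+1 := by omega
    rw [e]
    have := hgap (K+k)
    omega

/-! ### Linear independence of 1, s, t -/

lemma indep_aux (x : ℕ → ℕ) (hgap : ∀ k, x k + k + 1 ≤ x (k+1)) (u v w : ℤ)
    (h : (u:ℝ) + v * (∑' j, ((2:ℝ)⁻¹)^(x (2*j))) + w * (∑' j, ((2:ℝ)⁻¹)^(x (2*j+1))) = 0) :
    u = 0 ∧ v = 0 ∧ w = 0 := by
  have hxk : ∀ k, k ≤ x k := by
    intro k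
    induction k with
    | zero => omega
    | succ k ih => have := hgap k; omega
  have hxjK : ∀ K j, x K + j ≤ x (j + K) := by
    intro K j
    have := x_add hgap K j
    rwa [Nat.add_comm K j] at this
  have hmono : Monotone x := monotone_nat_of_le_succ (fun k => by have := hgap k; omega)
  set f : ℕ → ℝ := fun k => (if Even k then (v:ℝ) else (w:ℝ)) * ((2:ℝ)⁻¹)^(x k) with hf
  set C : ℝ := |(v:ℝ)| + |(w:ℝ)| with hC
  have hCnn : 0 ≤ C := by positivity
  have habs : ∀ k, |f k| ≤ C * ((2:ℝ)⁻¹)^(x k) := by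
    intro k
    rw [hf]
    simp only [abs_mul]
    have h2 : |((2:ℝ)⁻¹)^(x k)| = ((2:ℝ)⁻¹)^(x k) := abs_of_nonneg (by positivity)
    rw [h2]
    have hle : |if Even k then (v:ℝ) else (w:ℝ)| ≤ C := by
      split
      · rw [hC]; linarith [abs_nonneg ((w:ℝ))]
      · rw [hC]; linarith [abs_nonneg ((v:ℝ))]
    nlinarith [pow_nonneg (by norm_num : (0:ℝ) ≤ 2⁻¹) (x k), abs_nonneg (if Even k then (v:ℝ) else (w:ℝ))]
  have hsum : Summable f := by
    refine Summable.of_norm ?_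
    exact Summable.of_nonneg_of_le (fun k => norm_nonneg _) (fun k => habs k)
      ((summable_pow_half hxk).mul_left C)
  have hse : ∀ j, f (2*j) = (v:ℝ) * ((2:ℝ)⁻¹)^(x (2*j)) := by
    intro j; simp [hf, even_two_mul j]
  have hto : ∀ j, f (2*j+1) = (w:ℝ) * ((2:ℝ)⁻¹)^(x (2*j+1)) := by
    intro j; rw [hf]; simp [Nat.even_add_one, Nat.even_mul]
  have hcomb : (u:ℝ) + ∑' k, f k = 0 := by
    rw [← tsum_even_add_odd (by simpa [hse] using ((summable_pow_half (fun j => le_trans (by omega) (hxk (2*j)))).mul_left (v:ℝ)))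
      (by simpa [hto] using ((summable_pow_half (fun j => le_trans (by omega) (hxk (2*j+1)))).mul_left (w:ℝ)))]
    simp_rw [hse, hto]
    rw [tsum_mul_left, tsum_mul_left]
    linarith [h]
  set T : ℕ → ℝ := fun K => ∑' k, f (k + K) with hT
  have hTsum : ∀ K, Summable (fun k => f (k + K)) := fun K => (summable_nat_add_iff K).2 hsum
  have habssum : ∀ K, Summable (fun k => |f (k + K)|) := by
    intro K
    exact Summable.of_nonneg_of_le (fun k => abs_nonneg _) (fun k => habs (k+K))
      (((summable_pow_half (fun j => le_trans (by omega) (hxk (j+K)))).mul_left C))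
  have hTbound : ∀ K, |T K| ≤ C * (((2:ℝ)⁻¹)^(x K) * 2) := by
    intro K
    have h1 : |T K| ≤ ∑' k, |f (k + K)| := by
      simpa [hT] using norm_tsum_le_tsum_norm (f := fun k => f (k + K)) (habssum K)
    have h2 : ∑' k, |f (k + K)| ≤ ∑' k, C * ((2:ℝ)⁻¹)^(x (k + K)) := by
      refine Summable.tsum_le_tsum (fun k => habs (k+K)) (habssum K)
        (((summable_pow_half (fun j => le_trans (by omega) (hxk (j+K)))).mul_left C))
    have h3 : ∑' k, C * ((2:ℝ)⁻¹)^(x (k + K)) ≤ C * (((2:ℝ)⁻¹)^(x K) * 2) := by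
      rw [tsum_mul_left]
      refine mul_le_mul_of_nonneg_left ?_ hCnn
      exact tsum_pow_half_le (fun j => hxjK K j)
    linarith
  have hTrec : ∀ K, T K = f K + T (K+1) := by
    intro K
    have h0 := (Summable.sum_add_tsum_nat_add 1 (hTsum K)).symm
    simp only [Finset.sum_range_one, zero_add] at h0
    have e1 : ∑' (i:ℕ), f (i + 1 + K) = T (K+1) := by
      rw [hT]
      exact tsum_congr (fun i => by congr 1; omega)
    rw [hT]
    simp only
    rw [h0, e1]
  have hTint : ∀ K, ∃ m : ℤ, T (K+1) = (m : ℝ) * ((2:ℝ)⁻¹)^(x K) := by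
    intro K
    refine ⟨-(u * 2^(x K) + ∑ k ∈ Finset.range (K+1), (if Even k then v else w) * 2^(x K - x k)), ?_⟩
    have hsplit := Summable.sum_add_tsum_nat_add (K+1) hsum
    have heq : T (K+1) = -(u:ℝ) - ∑ k ∈ Finset.range (K+1), f k := by
      rw [hT]
      have h5 : (u:ℝ) + ((∑ k ∈ Finset.range (K+1), f k) + ∑' k, f (k + (K+1))) = 0 := by
        rw [hsplit]; exact hcomb
      simp only
      linarith [h5]
    rw [heq]
    push_cast [apply_ite (fun z : ℤ => (z:ℝ))]
    rw [neg_mul, add_mul, Finset.sum_mul]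
    have hterm : ∀ k ∈ Finset.range (K+1),
        ((if Even k then (v:ℝ) else (w:ℝ)) * (2:ℝ)^(x K - x k)) * ((2:ℝ)⁻¹)^(x K) = f k := by
      intro k hk
      rw [Finset.mem_range] at hk
      have hle : x k ≤ x K := hmono (by omega)
      rw [hf]
      simp only
      rw [mul_assoc]
      congr 1
      have hpow : (2:ℝ)^(x K) = 2^(x K - x k) * 2^(x k) := by
        rw [← pow_add]; congr 1; omega
      rw [inv_pow, hpow, mul_inv, ← mul_assoc, mul_inv_cancel₀ (by positivity), one_mul, ← inv_pow]
    rw [Finset.sum_congr rfl hterm]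
    have h1 : (2:ℝ)^(x K) * ((2:ℝ)⁻¹)^(x K) = 1 := by
      rw [inv_pow, mul_inv_cancel₀ (by positivity)]
    rw [mul_assoc, h1, mul_one]
    ring
  obtain ⟨N, hN⟩ := pow_unbounded_of_one_lt (C * 2) (by norm_num : (1:ℝ) < 2)
  have hT0 : ∀ K, N ≤ K → T (K+1) = 0 := by
    intro K hK
    obtain ⟨m, hm⟩ := hTint K
    have hb := hTbound (K+1)
    have h2 : ((2:ℝ)⁻¹)^(x (K+1)) ≤ ((2:ℝ)⁻¹)^(x K + K + 1) :=
      pow_le_pow_of_le_one (by norm_num) (by norm_num) (hgap K)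
    have hpos : (0:ℝ) < ((2:ℝ)⁻¹)^(x K) := by positivity
    have h3 : |(m:ℝ)| * ((2:ℝ)⁻¹)^(x K) ≤ C * 2 * (((2:ℝ)⁻¹)^(x K) * ((2:ℝ)⁻¹)^(K + 1)) := by
      have e : ((2:ℝ)⁻¹)^(x K + K + 1) = ((2:ℝ)⁻¹)^(x K) * ((2:ℝ)⁻¹)^(K+1) := by
        rw [← pow_add, Nat.add_assoc]
      rw [hm, abs_mul, abs_of_nonneg (le_of_lt hpos)] at hb
      calc |(m:ℝ)| * ((2:ℝ)⁻¹)^(x K) ≤ C * (((2:ℝ)⁻¹)^(x (K+1)) * 2) := hb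
        _ ≤ C * (((2:ℝ)⁻¹)^(x K + K + 1) * 2) := by nlinarith
        _ = C * 2 * (((2:ℝ)⁻¹)^(x K) * ((2:ℝ)⁻¹)^(K + 1)) := by rw [e]; ring
    have h4 : |(m:ℝ)| ≤ C * 2 * ((2:ℝ)⁻¹)^(K + 1) := by
      have := (mul_le_mul_iff_of_pos_right hpos).1 (by linarith [h3] : |(m:ℝ)| * ((2:ℝ)⁻¹)^(x K) ≤ (C * 2 * ((2:ℝ)⁻¹)^(K+1)) * ((2:ℝ)⁻¹)^(x K))
      exact this
    have h5 : C * 2 * ((2:ℝ)⁻¹)^(K + 1) < 1 := by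
      have hKN : ((2:ℝ)⁻¹)^(K+1) ≤ ((2:ℝ)⁻¹)^N :=
        pow_le_pow_of_le_one (by norm_num) (by norm_num) (by omega)
      have hNpos : (0:ℝ) < 2^N := by positivity
      have : C * 2 * ((2:ℝ)⁻¹)^N < 1 := by
        rw [inv_pow]
        rw [mul_inv_lt_iff₀' hNpos]
        linarith [hN]
      nlinarith [pow_nonneg (by norm_num : (0:ℝ) ≤ 2⁻¹) (K+1), pow_nonneg (by norm_num : (0:ℝ) ≤ 2⁻¹) N]
    have hm0 : m = 0 := by
      have : |(m:ℝ)| < 1 := lt_of_le_of_lt h4 h5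
      rw [← Int.cast_abs] at this
      have : |m| < 1 := by exact_mod_cast this
      exact Int.abs_lt_one_iff.1 this
    rw [hm, hm0]
    simp
  have hf0 : ∀ k, N + 1 ≤ k → f k = 0 := by
    intro k hk
    obtain ⟨K, rfl⟩ : ∃ K, k = K + 1 := ⟨k - 1, by omega⟩
    have h1 : T (K+1) = 0 := hT0 K (by omega)
    have h2 : T (K+2) = 0 := hT0 (K+1) (by omega)
    have := hTrec (K+1)
    rw [h1] at this
    have e : K + 1 + 1 = K + 2 := by omega
    rw [e, h2] at this
    linarith
  have hv : v = 0 := by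
    have h1 := hf0 (2*(N+1)) (by omega)
    rw [hse (N+1)] at h1
    have h2 : ((2:ℝ)⁻¹)^(x (2*(N+1))) ≠ 0 := by positivity
    have : (v:ℝ) = 0 := by
      rcases mul_eq_zero.1 h1 with h | h
      · exact h
      · exact absurd h h2
    exact_mod_cast this
  have hw : w = 0 := by
    have h1 := hf0 (2*(N+1)+1) (by omega)
    rw [hto (N+1)] at h1
    have h2 : ((2:ℝ)⁻¹)^(x (2*(N+1)+1)) ≠ 0 := by positivity
    have : (w:ℝ) = 0 := by
      rcases mul_eq_zero.1 h1 with h | h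
      · exact h
      · exact absurd h h2
    exact_mod_cast this
  refine ⟨?_, hv, hw⟩
  have hfz : ∀ k, f k = 0 := by
    intro k
    rw [hf]
    simp only [hv, hw]
    simp
  have : ∑' k, f k = 0 := by
    rw [tsum_congr hfz]
    exact tsum_zero
  rw [this] at hcomb
  exact_mod_cast (by linarith : (u:ℝ) = 0)

/-! ### Digit decomposition and injectivity -/

def pD : Fin 6 → ℤ := ![0,1,0,1,0,1]
def qD : Fin 6 → ℤ := ![0,0,1,1,0,0]
def rD : Fin 6 → ℤ := ![0,0,0,0,1,1]

def wsum (g : Fin 6 → ℤ) : List (Fin 6) → ℤ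
  | [] => 0
  | i :: l => g i * 2 ^ l.length + wsum g l

lemma compST_nil (s t : ℝ) (y : ℝ) : compST s t [] y = y := rfl

lemma compST_cons (s t : ℝ) (i : Fin 6) (l : List (Fin 6)) (y : ℝ) :
    compST s t (i :: l) y = (compST s t l y + ![0, 1, s, 1 + s, t, 1 + t] i) / 2 := rfl

lemma dval_eq (s t : ℝ) (i : Fin 6) :
    (![0, 1, s, 1 + s, t, 1 + t] : Fin 6 → ℝ) i = (pD i : ℝ) + (qD i : ℝ) * s + (rD i : ℝ) * t := by
  fin_cases i
  · show (0:ℝ) = ((0:ℤ):ℝ) + ((0:ℤ):ℝ) * s + ((0:ℤ):ℝ) * t; push_cast; ring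
  · show (1:ℝ) = ((1:ℤ):ℝ) + ((0:ℤ):ℝ) * s + ((0:ℤ):ℝ) * t; push_cast; ring
  · show s = ((0:ℤ):ℝ) + ((1:ℤ):ℝ) * s + ((0:ℤ):ℝ) * t; push_cast; ring
  · show 1 + s = ((1:ℤ):ℝ) + ((1:ℤ):ℝ) * s + ((0:ℤ):ℝ) * t; push_cast; ring
  · show t = ((0:ℤ):ℝ) + ((0:ℤ):ℝ) * s + ((1:ℤ):ℝ) * t; push_cast; ring
  · show 1 + t = ((1:ℤ):ℝ) + ((0:ℤ):ℝ) * s + ((1:ℤ):ℝ) * t; push_cast; ring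

lemma compST_val (s t : ℝ) : ∀ l : List (Fin 6),
    compST s t l 0 * 2 ^ l.length = (wsum pD l : ℝ) + (wsum qD l : ℝ) * s + (wsum rD l : ℝ) * t := by
  intro l
  induction l with
  | nil => simp [compST_nil, wsum]
  | cons i l ih =>
    rw [compST_cons, wsum, wsum, wsum]
    push_cast
    simp only [List.length_cons, pow_succ]
    have : compST s t l 0 * 2 ^ l.length = (wsum pD l : ℝ) + (wsum qD l : ℝ) * s + (wsum rD l : ℝ) * t := ih
    rw [dval_eq s t i]
    field_simp
    nlinarith [this]

lemma wsum_bounds {g : Fin 6 → ℤ} (hg : ∀ i, g i = 0 ∨ g i = 1) :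
    ∀ l : List (Fin 6), 0 ≤ wsum g l ∧ wsum g l < 2 ^ l.length := by
  intro l
  induction l with
  | nil => simp [wsum]
  | cons i l ih =>
    rw [wsum]
    simp only [List.length_cons, pow_succ]
    have h2 : (0:ℤ) < 2 ^ l.length := by positivity
    rcases hg i with h | h <;> rw [h] <;> constructor <;> nlinarith [ih.1, ih.2]

lemma wsum_cons_inj {g : Fin 6 → ℤ} (hg : ∀ i, g i = 0 ∨ g i = 1) {i j : Fin 6}
    {a b : List (Fin 6)} (hlen : a.length = b.length)
    (h : wsum g (i :: a) = wsum g (j :: b)) : g i = g j ∧ wsum g a = wsum g b := by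
  rw [wsum, wsum, hlen] at h
  have ha := wsum_bounds hg a
  have hb := wsum_bounds hg b
  rw [hlen] at ha
  rcases hg i with h1 | h1 <;> rcases hg j with h2 | h2 <;> rw [h1, h2] at h ⊢ <;>
    constructor <;> nlinarith [ha.1, ha.2, hb.1, hb.2]

lemma words_eq : ∀ a b : List (Fin 6), a.length = b.length →
    wsum pD a = wsum pD b → wsum qD a = wsum qD b → wsum rD a = wsum rD b → a = b := by
  intro a
  induction a with
  | nil => intro b hlen _ _ _; cases b with
    | nil => rfl
    | cons j b => simp at hlen
  | cons i a ih =>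
    intro b hlen hp hq hr
    cases b with
    | nil => simp at hlen
    | cons j b =>
      simp only [List.length_cons, Nat.add_right_cancel_iff] at hlen
      have h1 := wsum_cons_inj (g := pD) (by decide) hlen hp
      have h2 := wsum_cons_inj (g := qD) (by decide) hlen hq
      have h3 := wsum_cons_inj (g := rD) (by decide) hlen hr
      have hij : i = j := by
        have : ∀ i j : Fin 6, pD i = pD j → qD i = qD j → rD i = rD j → i = j := by decide
        exact this i j h1.1 h2.1 h3.1
      rw [hij, ih b hlen h1.2 h2.2 h3.2]

/-! ### Words with prescribed values -/

lemma compST_replicate (s t : ℝ) : ∀ m, compST s t (List.replicate m 0) 0 = 0 := by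
  intro m
  induction m with
  | zero => rfl
  | succ m ih =>
    rw [List.replicate_succ, compST_cons, ih]
    show ((0:ℝ) + 0) / 2 = 0
    norm_num

lemma compST_ofFn (s t : ℝ) : ∀ (n : ℕ) (g : ℕ → Fin 6),
    compST s t (List.ofFn (fun i : Fin n => g i.val)) 0 =
      ∑ k ∈ Finset.range n, ((2:ℝ)⁻¹) ^ (k+1) * (![0, 1, s, 1 + s, t, 1 + t] (g k)) := by
  intro n
  induction n with
  | zero => intro g; simp [compST]
  | succ n ih =>
    intro g
    rw [List.ofFn_succ, compST_cons]
    have e1 : (List.ofFn fun i : Fin n => (fun i : Fin (n+1) => g i.val) i.succ)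
        = List.ofFn (fun i : Fin n => g (i.val + 1)) := by
      congr 1
    rw [e1, ih (fun k => g (k+1)), Finset.sum_range_succ']
    simp only [Fin.val_zero]
    rw [div_eq_mul_inv, add_mul, Finset.sum_mul]
    congr 1
    · exact Finset.sum_congr rfl (fun k _ => by ring)
    · rw [zero_add, pow_one, mul_comm]

lemma delta_le (s t : ℝ) (σ : Fin 6) (val : ℝ)
    (hσ : (![0, 1, s, 1 + s, t, 1 + t] : Fin 6 → ℝ) σ = val)
    (y : ℕ → ℕ) (hstep : ∀ k, y k < y (k+1))
    (hval : val = ∑' j, ((2:ℝ)⁻¹)^(y j))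
    (n : ℕ) (hn : 1 ≤ n) (J : ℕ)
    (hJlt : ∀ j, j < J → y j < n) (hJge : n ≤ y J)
    (e : ℝ) (hcov : 2 * ((2:ℝ)⁻¹)^(y J) ≤ e) :
    DeltaST s t n ≤ e := by
  classical
  have hyadd : ∀ K j, y K + j ≤ y (K + j) := by
    intro K j
    induction j with
    | zero => simp
    | succ j ih =>
      have e2 : K + (j+1) = (K+j)+1 := by omega
      rw [e2]
      have := hstep (K+j)
      omega
  have hyj : ∀ j, j ≤ y j := by
    intro j
    have := hyadd 0 j
    simp at this
    omega
  have hymono : StrictMono y := strictMono_nat_of_lt_succ hstep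
  set a : List (Fin 6) := σ :: List.replicate (n-1) 0 with ha
  have ha_len : a.length = n := by
    rw [ha]
    simp [List.length_replicate]
    omega
  have hva : compST s t a 0 = val / 2 := by
    rw [ha, compST_cons, compST_replicate, hσ, zero_add]
  set P : ℕ → Prop := fun k => ∃ j, y j = k with hP
  set g : ℕ → Fin 6 := fun k => if P k then 1 else 0 with hg
  set b : List (Fin 6) := List.ofFn (fun i : Fin n => g i.val) with hb
  have hb_len : b.length = n := by rw [hb]; simp
  have hdg : ∀ k, (![0, 1, s, 1 + s, t, 1 + t] : Fin 6 → ℝ) (g k) = if P k then (1:ℝ) else 0 := by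
    intro k
    by_cases h : P k
    · rw [hg]; simp only [if_pos h]; rfl
    · rw [hg]; simp only [if_neg h]; rfl
  have hvb : compST s t b 0 = ∑ j ∈ Finset.range J, ((2:ℝ)⁻¹)^(y j + 1) := by
    rw [hb, compST_ofFn]
    have e3 : ∀ k, ((2:ℝ)⁻¹) ^ (k+1) * (![0, 1, s, 1 + s, t, 1 + t] (g k))
        = if P k then ((2:ℝ)⁻¹)^(k+1) else 0 := by
      intro k
      rw [hdg k, mul_ite, mul_one, mul_zero]
    rw [Finset.sum_congr rfl (fun k _ => e3 k), ← Finset.sum_filter]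
    have hset : Finset.filter P (Finset.range n) = Finset.image y (Finset.range J) := by
      ext k
      simp only [Finset.mem_filter, Finset.mem_range, Finset.mem_image]
      constructor
      · rintro ⟨hkn, j, rfl⟩
        refine ⟨j, ?_, rfl⟩
        by_contra hj
        have : J ≤ j := by omega
        have := hymono.monotone this
        omega
      · rintro ⟨j, hj, rfl⟩
        exact ⟨hJlt j hj, j, rfl⟩
    rw [hset, Finset.sum_image (fun i _ j _ h => hymono.injective h)]
  set Tail : ℝ := ∑' j, ((2:ℝ)⁻¹)^(y (j + J) + 1) with hTail
  have hsummable : Summable (fun j => ((2:ℝ)⁻¹)^(y j + 1)) :=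
    summable_pow_half (fun j => by have := hyj j; omega)
  have hsplit : compST s t b 0 + Tail = val * 2⁻¹ := by
    rw [hvb, hTail]
    rw [Summable.sum_add_tsum_nat_add J hsummable]
    have : ∀ j:ℕ, ((2:ℝ)⁻¹)^(y j + 1) = ((2:ℝ)⁻¹)^(y j) * 2⁻¹ := fun j => pow_succ _ _
    simp_rw [this]
    rw [tsum_mul_right, hval]
  have hTail_pos : 0 < Tail := by
    have h1 : ((2:ℝ)⁻¹)^(y (0 + J) + 1) ≤ Tail := by
      rw [hTail]
      exact Summable.le_tsum (summable_pow_half (g := fun j => y (j + J) + 1) (fun j => by have := hyj (j+J); show j ≤ y (j + J) + 1; omega)) 0 (fun j _ => by positivity)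
    have : (0:ℝ) < ((2:ℝ)⁻¹)^(y (0 + J) + 1) := by positivity
    linarith
  have hTail_le : Tail ≤ ((2:ℝ)⁻¹)^(y J) := by
    have h1 : Tail ≤ ((2:ℝ)⁻¹)^(y J + 1) * 2 := by
      rw [hTail]
      refine tsum_pow_half_le (fun j => ?_)
      have := hyadd J j
      rw [Nat.add_comm J j] at this
      omega
    have h2 : ((2:ℝ)⁻¹)^(y J + 1) * 2 = ((2:ℝ)⁻¹)^(y J) := by
      rw [pow_succ]
      ring
    linarith
  have hdiff : compST s t a 0 - compST s t b 0 = Tail := by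
    rw [hva]
    have : compST s t b 0 = val * 2⁻¹ - Tail := by linarith
    rw [this]
    ring
  have hab : a ≠ b := by
    intro h
    rw [h] at hdiff
    simp at hdiff
    linarith
  have hmem : |compST s t a 0 - compST s t b 0| ∈
      {r : ℝ | ∃ a' b' : List (Fin 6), a'.length = n ∧ b'.length = n ∧ a' ≠ b' ∧
        r = |compST s t a' 0 - compST s t b' 0|} :=
    ⟨a, b, ha_len, hb_len, hab, rfl⟩
  have hbdd : BddBelow {r : ℝ | ∃ a' b' : List (Fin 6), a'.length = n ∧ b'.length = n ∧ a' ≠ b' ∧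
      r = |compST s t a' 0 - compST s t b' 0|} := by
    refine ⟨0, fun r hr => ?_⟩
    obtain ⟨a', b', _, _, _, rfl⟩ := hr
    exact abs_nonneg _
  refine csInf_le_of_le hbdd hmem ?_
  rw [hdiff, abs_of_pos hTail_pos]
  have : (0:ℝ) < ((2:ℝ)⁻¹)^(y J) := by positivity
  linarith

/-! ### Main theorem -/

theorem stmt8 (ε : ℕ → ℝ) (hε : ∀ n, 1 ≤ n → 0 < ε n) :
    ∃ s t : ℝ, s ∈ Set.Ioo (0:ℝ) 1 ∧ t ∈ Set.Ioo (0:ℝ) 1 ∧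
      Irrational s ∧ Irrational t ∧
      (∀ n : ℕ, ∀ a b : List (Fin 6), a.length = n → b.length = n → a ≠ b →
        compST s t a ≠ compST s t b) ∧
      ∀ n, 1 ≤ n → DeltaST s t n ≤ ε n := by
  classical
  have hstep : ∀ (k : ℕ) (p : ℕ × ℕ), ∃ M : ℕ, (p.2 + k + 1 ≤ M) ∧
      ∀ n, p.1 < n → n ≤ p.2 → 2 * ((2:ℝ)⁻¹)^M ≤ ε n := by
    intro k p
    by_cases hne : (Finset.Icc (p.1+1) p.2).Nonempty
    · set δ := (Finset.Icc (p.1+1) p.2).inf' hne ε with hδ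
      have hδpos : 0 < δ := by
        rw [hδ, Finset.lt_inf'_iff]
        intro n hn
        rw [Finset.mem_Icc] at hn
        exact hε n (by omega)
      obtain ⟨m, hm⟩ := exists_pow_lt_of_lt_one (by linarith : (0:ℝ) < δ/2) (by norm_num : (2:ℝ)⁻¹ < 1)
      refine ⟨max m (p.2+k+1), le_max_right _ _, fun n h1 h2 => ?_⟩
      have h3 : ((2:ℝ)⁻¹)^(max m (p.2+k+1)) ≤ ((2:ℝ)⁻¹)^m :=
        pow_le_pow_of_le_one (by norm_num) (by norm_num) (le_max_left _ _)
      have h4 : δ ≤ ε n := Finset.inf'_le ε (by rw [Finset.mem_Icc]; omega)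
      linarith [hm, h3, h4]
    · refine ⟨p.2+k+1, le_refl _, fun n h1 h2 => ?_⟩
      exact absurd ⟨n, Finset.mem_Icc.mpr ⟨by omega, h2⟩⟩ hne
  choose F hF1 hF2 using hstep
  set X : ℕ → ℕ × ℕ := fun k => Nat.rec ((0:ℕ),(1:ℕ)) (fun k p => (p.2, F k p)) k with hX
  set x : ℕ → ℕ := fun k => (X k).2 with hx
  have hX0 : X 0 = (0,1) := rfl
  have hXs : ∀ k, X (k+1) = ((X k).2, F k (X k)) := fun k => rfl
  have hx0 : x 0 = 1 := rfl
  have hgap : ∀ k, x k + k + 1 ≤ x (k+1) := by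
    intro k
    have := hF1 k (X k)
    rw [hx]
    simpa [hXs k] using this
  have hX1 : ∀ k, (X (k+1)).1 = x k := fun k => rfl
  have hcov : ∀ k n, (X k).1 < n → n ≤ x k → 2 * ((2:ℝ)⁻¹)^(x (k+1)) ≤ ε n := by
    intro k n h1 h2
    have := hF2 k (X k) n h1 h2
    have e : x (k+1) = F k (X k) := rfl
    rwa [e]
  have hxge : ∀ k, k + 1 ≤ x k := by
    intro k
    induction k with
    | zero => rw [hx0]
    | succ k ih => have := hgap k; omega
  have hmonos : StrictMono x := strictMono_nat_of_lt_succ (fun k => by have := hgap k; omega)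
  set s : ℝ := ∑' j, ((2:ℝ)⁻¹)^(x (2*j)) with hs
  set t : ℝ := ∑' j, ((2:ℝ)⁻¹)^(x (2*j+1)) with ht
  have hindep : ∀ u v w : ℤ, (u:ℝ) + v * s + w * t = 0 → u = 0 ∧ v = 0 ∧ w = 0 := by
    intro u v w h
    exact indep_aux x hgap u v w (by rw [← hs, ← ht]; exact h)
  refine ⟨s, t, ⟨?_, ?_⟩, ⟨?_, ?_⟩, ?_, ?_, ?_, ?_⟩
  · rw [hs]; exact tsum_pow_half_pos (fun j => by have := hxge (2*j); omega)
  · rw [hs]; exact tsum_pow_half_lt_one (fun j => by have := hxge (2*j); omega)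
  · rw [ht]; exact tsum_pow_half_pos (fun j => by have := hxge (2*j+1); omega)
  · rw [ht]; exact tsum_pow_half_lt_one (fun j => by have := hxge (2*j+1); omega)
  · -- Irrational s
    rintro ⟨q, hq⟩
    have hden : ((q.den:ℤ):ℝ) ≠ 0 := by
      have := q.den_pos
      simp only [Int.cast_natCast]
      positivity
    have hrel : ((-q.num : ℤ):ℝ) + ((q.den:ℤ):ℝ) * s + ((0:ℤ):ℝ) * t = 0 := by
      rw [← hq, Rat.cast_def]
      push_cast
      field_simp
      ring
    obtain ⟨_, hv, _⟩ := hindep _ _ _ hrel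
    have := q.den_pos
    omega
  · -- Irrational t
    rintro ⟨q, hq⟩
    have hrel : ((-q.num : ℤ):ℝ) + ((0:ℤ):ℝ) * s + ((q.den:ℤ):ℝ) * t = 0 := by
      rw [← hq, Rat.cast_def]
      push_cast
      field_simp
      ring
    obtain ⟨_, _, hw⟩ := hindep _ _ _ hrel
    have := q.den_pos
    omega
  · -- no exact overlaps
    intro n a b hla hlb hne hfeq
    apply hne
    have h0 : compST s t a 0 = compST s t b 0 := by rw [hfeq]
    have hlen : a.length = b.length := by omega
    have e : (wsum pD a : ℝ) + (wsum qD a : ℝ) * s + (wsum rD a : ℝ) * t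
        = (wsum pD b : ℝ) + (wsum qD b : ℝ) * s + (wsum rD b : ℝ) * t := by
      rw [← compST_val, ← compST_val, h0, hlen]
    have hrel : ((wsum pD a - wsum pD b : ℤ):ℝ) + ((wsum qD a - wsum qD b : ℤ):ℝ) * s
        + ((wsum rD a - wsum rD b : ℤ):ℝ) * t = 0 := by
      push_cast
      linarith [e]
    obtain ⟨h1, h2, h3⟩ := hindep _ _ _ hrel
    exact words_eq a b hlen (by omega) (by omega) (by omega)
  · -- Delta bound
    intro n hn
    have hex : ∃ k, n ≤ x k := ⟨n, by have := hxge n; omega⟩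
    obtain ⟨k, hk, hkmin⟩ : ∃ k, n ≤ x k ∧ ∀ i, i < k → x i < n := by
      refine ⟨Nat.find hex, Nat.find_spec hex, fun i hi => ?_⟩
      have := Nat.find_min hex hi
      omega
    have hXk1 : (X k).1 < n := by
      by_cases hk0 : k = 0
      · rw [hk0, hX0]; omega
      · obtain ⟨k', rfl⟩ : ∃ k', k = k' + 1 := ⟨k - 1, by omega⟩
        rw [hX1 k']
        exact hkmin k' (by omega)
    have hcovn : 2 * ((2:ℝ)⁻¹)^(x (k+1)) ≤ ε n := hcov k n hXk1 hk
    have hnk1 : n ≤ x (k+1) := le_trans hk (hmonos.monotone (Nat.le_succ k))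
    rcases Nat.even_or_odd (k+1) with he | ho
    · -- use s-word
      obtain ⟨J, hJ⟩ := he
      have hJlt : ∀ j, j < J → x (2*j) < n := by
        intro j hj
        refine hkmin (2*j) ?_
        omega
      have hstep2 : ∀ j, x (2*j) < x (2*(j+1)) := fun j => hmonos (show 2*j < 2*(j+1) by omega)
      refine delta_le s t 2 s rfl (fun j => x (2*j)) hstep2 hs n hn J
        hJlt ?_ (ε n) ?_
      · show n ≤ x (2*J)
        have e2 : 2*J = k+1 := by omega
        rw [e2]; exact hnk1
      · show 2 * ((2:ℝ)⁻¹)^(x (2*J)) ≤ ε n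
        have e2 : 2*J = k+1 := by omega
        rw [e2]; exact hcovn
    · -- use t-word
      obtain ⟨J, hJ⟩ := ho
      have hJlt : ∀ j, j < J → x (2*j+1) < n := by
        intro j hj
        refine hkmin (2*j+1) ?_
        omega
      have hstep2 : ∀ j, x (2*j+1) < x (2*(j+1)+1) := fun j => hmonos (show 2*j+1 < 2*(j+1)+1 by omega)
      refine delta_le s t 4 t rfl (fun j => x (2*j+1)) hstep2 ht n hn J
        hJlt ?_ (ε n) ?_
      · show n ≤ x (2*J+1)
        have e2 : 2*J+1 = k+1 := by omega
        rw [e2]; exact hnk1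
      · show 2 * ((2:ℝ)⁻¹)^(x (2*J+1)) ≤ ε n
        have e2 : 2*J+1 = k+1 := by omega
        rw [e2]; exact hcovn
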